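/- For real x and y with x,y>0, the double integral ∫₀^∞ ∫₀^∞ (1/(√x √y)) · exp(−(x² + 4xy + y²)/(4y)) · log(x/y) dx dy equals −2√2 · π · arccosh(2). -/

import Mathlib

open Real MeasureTheory Set

lemma log_le_rpow_of_one_le {s : ℝ} (hs : 1 ≤ s) : Real.log s ≤ 4 * s ^ ((1:ℝ)/4) := by
  have h0 : (0:ℝ) < s := by linarith
  have h1 : Real.log (s ^ ((1:ℝ)/4)) ≤ s ^ ((1:ℝ)/4) - 1 :=
    Real.log_le_sub_one_of_pos (Real.rpow_pos_of_pos h0 _)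
  rw [Real.log_rpow h0] at h1
  nlinarith [Real.rpow_nonneg h0.le ((1:ℝ)/4)]

lemma abs_log_le_rpow_of_le_one {s : ℝ} (h0 : 0 < s) (hs : s ≤ 1) :
    |Real.log s| ≤ 2 * s ^ (-(1:ℝ)/2) := by
  have hls : Real.log s ≤ 0 := Real.log_nonpos h0.le hs
  have h1 : Real.log (s ^ (-(1:ℝ)/2)) ≤ s ^ (-(1:ℝ)/2) - 1 :=
    Real.log_le_sub_one_of_pos (Real.rpow_pos_of_pos h0 _)
  rw [Real.log_rpow h0] at h1
  rw [abs_of_nonpos hls]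
  nlinarith [Real.rpow_nonneg h0.le (-(1:ℝ)/2)]

lemma aux_integrableOn {f : ℝ → ℝ} (hm : AEStronglyMeasurable f (volume.restrict (Ioi 0)))
    {C : ℝ} (h1 : ∀ s ∈ Ioc (0:ℝ) 1, ‖f s‖ ≤ C * s ^ (-(1:ℝ)/2))
    (h2 : ∀ s ∈ Ioi (1:ℝ), ‖f s‖ ≤ C * s ^ (-(5:ℝ)/4)) :
    IntegrableOn f (Ioi 0) := by
  have hsplit : Ioi (0:ℝ) = Ioc 0 1 ∪ Ioi 1 := (Ioc_union_Ioi_eq_Ioi zero_le_one).symm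
  rw [hsplit]
  apply IntegrableOn.union
  · refine Integrable.mono' (g := fun s => C * s ^ (-(1:ℝ)/2)) ?_ (hm.mono_set (by rw [hsplit]; exact subset_union_left)) ?_
    · have h : IntervalIntegrable (fun s : ℝ => s ^ (-(1:ℝ)/2)) volume 0 1 :=
        intervalIntegral.intervalIntegrable_rpow' (by norm_num)
      rw [intervalIntegrable_iff_integrableOn_Ioc_of_le zero_le_one] at h
      exact (h.const_mul C)
    · exact (ae_restrict_mem measurableSet_Ioc).mono h1
  · refine Integrable.mono' (g := fun s => C * s ^ (-(5:ℝ)/4)) ?_ (hm.mono_set (by rw [hsplit]; exact subset_union_right)) ?_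
    · exact (integrableOn_Ioi_rpow_of_lt (by norm_num) one_pos).const_mul C
    · exact (ae_restrict_mem measurableSet_Ioi).mono h2


lemma integrableOn_log_div_sq_add_sq {c : ℝ} (hc : 0 < c) :
    IntegrableOn (fun u : ℝ => Real.log u / (u^2 + c^2)) (Ioi 0) := by
  have hm : AEStronglyMeasurable (fun u : ℝ => Real.log u / (u^2 + c^2))
      (volume.restrict (Ioi 0)) := by
    apply Measurable.aestronglyMeasurable
    exact Real.measurable_log.div ((measurable_id.pow_const 2).add_const _)
  refine aux_integrableOn hm (C := 2/c^2 + 4) ?_ ?_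
  · rintro s ⟨h0, h1⟩
    have hb := abs_log_le_rpow_of_le_one h0 h1
    have hd : (0:ℝ) < s^2 + c^2 := by positivity
    rw [Real.norm_eq_abs, abs_div, abs_of_pos hd, div_le_iff₀ hd]
    have hr : (0:ℝ) ≤ s ^ (-(1:ℝ)/2) := Real.rpow_nonneg h0.le _
    calc |Real.log s| ≤ 2 * s ^ (-(1:ℝ)/2) := hb
      _ = (2/c^2) * s ^ (-(1:ℝ)/2) * c^2 := by field_simp
      _ ≤ (2/c^2 + 4) * s ^ (-(1:ℝ)/2) * (s^2 + c^2) := by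
          nlinarith [mul_nonneg (mul_nonneg (by positivity : (0:ℝ) ≤ 2/c^2) hr) (sq_nonneg s),
            mul_nonneg (mul_nonneg (by norm_num : (0:ℝ) ≤ 4) hr) (sq_nonneg s),
            mul_nonneg (mul_nonneg (by norm_num : (0:ℝ) ≤ 4) hr) (sq_nonneg c)]
  · rintro s hs
    rw [mem_Ioi] at hs
    have h0 : (0:ℝ) < s := by linarith
    have hb := log_le_rpow_of_one_le hs.le
    have habs : |Real.log s| = Real.log s := abs_of_nonneg (Real.log_nonneg hs.le)
    have hd : (0:ℝ) < s^2 + c^2 := by positivity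
    rw [Real.norm_eq_abs, abs_div, abs_of_pos hd, div_le_iff₀ hd, habs]
    have e1 : s ^ (-(5:ℝ)/4) * s ^ ((3:ℝ)/2) = s ^ ((1:ℝ)/4) := by
      rw [← Real.rpow_add h0]; norm_num
    have e2 : s ^ ((3:ℝ)/2) ≤ s ^ 2 := by
      rw [show (s:ℝ)^2 = s ^ (2:ℝ) by rw [Real.rpow_two]]
      exact Real.rpow_le_rpow_of_exponent_le hs.le (by norm_num)
    have hr : (0:ℝ) ≤ s ^ (-(5:ℝ)/4) := Real.rpow_nonneg h0.le _
    calc Real.log s ≤ 4 * s ^ ((1:ℝ)/4) := hb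
      _ = 4 * (s ^ (-(5:ℝ)/4) * s ^ ((3:ℝ)/2)) := by rw [e1]
      _ ≤ 4 * (s ^ (-(5:ℝ)/4) * s ^ 2) := by
          have := mul_le_mul_of_nonneg_left e2 hr
          linarith
      _ ≤ (2/c^2 + 4) * s ^ (-(5:ℝ)/4) * (s^2 + c^2) := by
          nlinarith [mul_nonneg (mul_nonneg (by positivity : (0:ℝ) ≤ 2/c^2) hr) (sq_nonneg s),
            mul_nonneg (mul_nonneg (by positivity : (0:ℝ) ≤ 2/c^2) hr) (sq_nonneg c),
            mul_nonneg (mul_nonneg (by norm_num : (0:ℝ) ≤ 4) hr) (sq_nonneg c)]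

lemma integral_log_div_sq_add_one : (∫ u in Ioi (0:ℝ), Real.log u / (u^2 + 1)) = 0 := by
  set f : ℝ → ℝ := fun u => Real.log u / (u^2 + 1) with hf
  have hp : (-1 : ℝ) ≠ 0 := by norm_num
  have key := integral_comp_rpow_Ioi f hp
  have congr1 : (∫ x in Ioi (0:ℝ), (|(-1:ℝ)| * x ^ ((-1:ℝ) - 1)) • f (x ^ (-1:ℝ)))
      = ∫ x in Ioi (0:ℝ), -f x := by
    refine setIntegral_congr_fun measurableSet_Ioi (fun x hx => ?_)
    rw [mem_Ioi] at hx
    have hx2 : x ^ ((-1:ℝ) - 1) = (x^2)⁻¹ := by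
      rw [show ((-1:ℝ) - 1) = -(2:ℝ) by norm_num, Real.rpow_neg hx.le, Real.rpow_two]
    rw [Real.rpow_neg_one, hx2, smul_eq_mul, hf]
    simp only
    rw [Real.log_inv]
    have h1 : x^2 ≠ 0 := by positivity
    have h2 : (x⁻¹)^2 + 1 ≠ 0 := by positivity
    have h3 : x^2 + 1 ≠ 0 := by positivity
    field_simp
    ring
  rw [congr1, integral_neg] at key
  linarith

lemma integral_log_div_sq_add_sq {c : ℝ} (hc : 0 < c) :
    (∫ u in Ioi (0:ℝ), Real.log u / (u^2 + c^2)) = π * Real.log c / (2*c) := by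
  set f : ℝ → ℝ := fun u => Real.log u / (u^2 + c^2) with hf
  have key := integral_comp_mul_left_Ioi f 0 hc
  rw [mul_zero] at key
  have congr1 : (∫ v in Ioi (0:ℝ), f (c * v))
      = ∫ v in Ioi (0:ℝ), (c^2)⁻¹ * (Real.log c * (1 + v^2)⁻¹ + Real.log v / (v^2 + 1)) := by
    refine setIntegral_congr_fun measurableSet_Ioi (fun v hv => ?_)
    rw [mem_Ioi] at hv
    rw [hf]
    simp only
    rw [Real.log_mul hc.ne' hv.ne']
    have h1 : (c*v)^2 + c^2 ≠ 0 := by positivity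
    have h2 : (1:ℝ) + v^2 ≠ 0 := by positivity
    have h3 : v^2 + (1:ℝ) ≠ 0 := by positivity
    field_simp
    ring
  have hint1 : IntegrableOn (fun v : ℝ => Real.log c * (1 + v^2)⁻¹) (Ioi 0) :=
    (integrable_inv_one_add_sq.integrableOn).const_mul _
  have hint2 : IntegrableOn (fun v : ℝ => Real.log v / (v^2 + 1)) (Ioi 0) := by
    simpa using integrableOn_log_div_sq_add_sq (c := 1) one_pos
  have hval : (∫ v in Ioi (0:ℝ), (c^2)⁻¹ * (Real.log c * (1 + v^2)⁻¹ + Real.log v / (v^2 + 1)))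
      = (c^2)⁻¹ * (Real.log c * (π/2)) := by
    rw [integral_const_mul, integral_add hint1 hint2, integral_const_mul,
      integral_log_div_sq_add_one, integral_Ioi_inv_one_add_sq]
    norm_num
  rw [congr1, hval, smul_eq_mul] at key
  -- key : ∫ v, f (c*v) = c⁻¹ • ∫ u in Ioi 0, f u, so ∫ f = c * LHS
  have : (∫ u in Ioi (0:ℝ), f u) = c * ((c^2)⁻¹ * (Real.log c * (π/2))) := by
    field_simp at key ⊢
    linarith [key]
  rw [hf] at this
  rw [this]
  field_simp


lemma integral_exp_neg_mul {b : ℝ} (hb : 0 < b) :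
    (∫ x in Ioi (0:ℝ), Real.exp (-(b * x))) = b⁻¹ := by
  have key := integral_comp_mul_left_Ioi (fun x => Real.exp (-x)) 0 hb
  rw [mul_zero, integral_exp_neg_Ioi_zero, smul_eq_mul, mul_one] at key
  exact key

lemma a_pos {s : ℝ} (hs : 0 < s) : 0 < (s^2 + 4*s + 1)/(4*s) :=
  div_pos (by nlinarith) (by linarith)

lemma integrableOn_G : IntegrableOn
    (fun s : ℝ => 4 * Real.sqrt s * |Real.log s| / (s^2 + 4*s + 1)) (Ioi 0) := by
  have hm : AEStronglyMeasurable
      (fun s : ℝ => 4 * Real.sqrt s * |Real.log s| / (s^2 + 4*s + 1))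
      (volume.restrict (Ioi 0)) := by
    apply Measurable.aestronglyMeasurable
    exact ((measurable_const.mul Real.continuous_sqrt.measurable).mul
      Real.measurable_log.abs).div
      (((measurable_id.pow_const 2).add (measurable_id.const_mul 4)).add_const 1)
  refine aux_integrableOn hm (C := 16) ?_ ?_
  · rintro s ⟨h0, h1⟩
    have hb := abs_log_le_rpow_of_le_one h0 h1
    have hd : (0:ℝ) < s^2 + 4*s + 1 := by nlinarith
    have hr : (0:ℝ) ≤ s ^ (-(1:ℝ)/2) := Real.rpow_nonneg h0.le _
    have hsq : Real.sqrt s ≤ 1 := by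
      rw [show (1:ℝ) = Real.sqrt 1 by simp]
      exact Real.sqrt_le_sqrt h1
    have hsq0 : 0 ≤ Real.sqrt s := Real.sqrt_nonneg s
    rw [Real.norm_eq_abs, abs_div, abs_of_pos hd, div_le_iff₀ hd]
    rw [abs_of_nonneg (by positivity : (0:ℝ) ≤ 4 * Real.sqrt s * |Real.log s|)]
    nlinarith [abs_nonneg (Real.log s), mul_nonneg hr (sq_nonneg s), mul_nonneg hr h0.le, hr,
      mul_le_mul hsq hb (abs_nonneg _) zero_le_one]
  · rintro s hs
    rw [mem_Ioi] at hs
    have h0 : (0:ℝ) < s := by linarith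
    have hb := log_le_rpow_of_one_le hs.le
    have habs : |Real.log s| = Real.log s := abs_of_nonneg (Real.log_nonneg hs.le)
    have hd : (0:ℝ) < s^2 + 4*s + 1 := by nlinarith
    have hr : (0:ℝ) ≤ s ^ (-(5:ℝ)/4) := Real.rpow_nonneg h0.le _
    rw [Real.norm_eq_abs, abs_div, abs_of_pos hd, div_le_iff₀ hd]
    rw [abs_of_nonneg (by positivity : (0:ℝ) ≤ 4 * Real.sqrt s * |Real.log s|), habs]
    have hsqrt : Real.sqrt s = s ^ ((1:ℝ)/2) := Real.sqrt_eq_rpow s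
    have e1 : s ^ ((1:ℝ)/2) * s ^ ((1:ℝ)/4) = s ^ (-(5:ℝ)/4) * s ^ (2:ℝ) := by
      rw [← Real.rpow_add h0, ← Real.rpow_add h0]; norm_num
    have e2 : s ^ (2:ℝ) = s^2 := by
      rw [show (2:ℝ) = ((2:ℕ):ℝ) by norm_num, Real.rpow_natCast]
    have hsq0 : (0:ℝ) ≤ 4 * Real.sqrt s := by positivity
    calc 4 * Real.sqrt s * Real.log s ≤ 4 * Real.sqrt s * (4 * s ^ ((1:ℝ)/4)) := by
          nlinarith [mul_le_mul_of_nonneg_left hb hsq0]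
      _ = 16 * (s ^ ((1:ℝ)/2) * s ^ ((1:ℝ)/4)) := by rw [hsqrt]; ring
      _ = 16 * (s ^ (-(5:ℝ)/4) * s^2) := by rw [e1, e2]
      _ ≤ 16 * s ^ (-(5:ℝ)/4) * (s^2 + 4*s + 1) := by
          nlinarith [mul_nonneg hr h0.le, hr]

noncomputable def Fk : ℝ × ℝ → ℝ := fun p =>
  (-Real.log p.1 / Real.sqrt p.1) * Real.exp (-((p.1^2 + 4*p.1 + 1)/(4*p.1) * p.2))

lemma Fk_meas : AEStronglyMeasurable Fk
    ((volume.restrict (Ioi (0:ℝ))).prod (volume.restrict (Ioi (0:ℝ)))) := by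
  apply Measurable.aestronglyMeasurable
  apply Measurable.mul
  · exact (Real.measurable_log.comp measurable_fst).neg.div
      (Real.continuous_sqrt.measurable.comp measurable_fst)
  · apply Real.measurable_exp.comp
    apply Measurable.neg
    exact ((((measurable_fst.pow_const 2).add (measurable_fst.const_mul 4)).add_const 1).div
      (measurable_fst.const_mul 4)).mul measurable_snd

lemma Fk_integrable : Integrable Fk
    ((volume.restrict (Ioi (0:ℝ))).prod (volume.restrict (Ioi (0:ℝ)))) := by
  rw [integrable_prod_iff Fk_meas]
  constructor
  · filter_upwards [ae_restrict_mem measurableSet_Ioi] with s hs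
    rw [mem_Ioi] at hs
    have := (exp_neg_integrableOn_Ioi 0 (a_pos hs)).const_mul (-Real.log s / Real.sqrt s)
    simpa [Fk, IntegrableOn, neg_mul] using this
  · refine integrableOn_G.congr ?_
    filter_upwards [ae_restrict_mem measurableSet_Ioi] with s hs
    rw [mem_Ioi] at hs
    have hbs := a_pos hs
    have step1 : (∫ x in Ioi (0:ℝ), ‖Fk (s, x)‖)
        = ∫ x in Ioi (0:ℝ), |(-Real.log s / Real.sqrt s)| *
            Real.exp (-((s^2 + 4*s + 1)/(4*s) * x)) := by
      refine setIntegral_congr_fun measurableSet_Ioi (fun x _ => ?_)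
      rw [Fk]
      simp only [Real.norm_eq_abs, abs_mul, Real.abs_exp]
    rw [step1, integral_const_mul, integral_exp_neg_mul hbs]
    have hs0 : Real.sqrt s ≠ 0 := (Real.sqrt_pos.mpr hs).ne'
    have hss : Real.sqrt s * Real.sqrt s = s := Real.mul_self_sqrt hs.le
    have habs : |(-Real.log s / Real.sqrt s)| = |Real.log s| / Real.sqrt s := by
      rw [abs_div, abs_neg, abs_of_nonneg (Real.sqrt_nonneg s)]
    rw [habs]
    have hd : s^2 + 4*s + 1 ≠ 0 := by nlinarith
    field_simp
    linear_combination (|Real.log s|) * hss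

lemma inner_eq {x : ℝ} (hx : 0 < x) :
    (∫ y in Ioi (0:ℝ), (1 / (Real.sqrt x * Real.sqrt y)) *
        Real.exp (-(x^2 + 4*x*y + y^2) / (4*y)) * Real.log (x/y))
    = ∫ s in Ioi (0:ℝ), (-Real.log s / Real.sqrt s) *
        Real.exp (-((s^2 + 4*s + 1)/(4*s) * x)) := by
  set g : ℝ → ℝ := fun y => (1 / (Real.sqrt x * Real.sqrt y)) *
    Real.exp (-(x^2 + 4*x*y + y^2) / (4*y)) * Real.log (x/y) with hg
  have key := integral_comp_mul_left_Ioi g 0 hx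
  rw [mul_zero, smul_eq_mul] at key
  have congr1 : (∫ s in Ioi (0:ℝ), g (x*s))
      = ∫ s in Ioi (0:ℝ), x⁻¹ * ((-Real.log s / Real.sqrt s) *
          Real.exp (-((s^2 + 4*s + 1)/(4*s) * x))) := by
    refine setIntegral_congr_fun measurableSet_Ioi (fun s hs => ?_)
    rw [mem_Ioi] at hs
    rw [hg]
    simp only
    have hxx : Real.sqrt x * Real.sqrt x = x := Real.mul_self_sqrt hx.le
    have h1 : Real.sqrt (x*s) = Real.sqrt x * Real.sqrt s := Real.sqrt_mul hx.le s
    have h2 : Real.log (x/(x*s)) = -Real.log s := by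
      rw [show x/(x*s) = s⁻¹ by field_simp, Real.log_inv]
    have h3 : -(x^2 + 4*x*(x*s) + (x*s)^2) / (4*(x*s)) = -((s^2 + 4*s + 1)/(4*s) * x) := by
      field_simp
      ring
    rw [h1, h2, h3, show Real.sqrt x * (Real.sqrt x * Real.sqrt s) = x * Real.sqrt s by
      rw [← mul_assoc, hxx]]
    have hs0 : Real.sqrt s ≠ 0 := (Real.sqrt_pos.mpr hs).ne'
    field_simp
  rw [congr1, integral_const_mul] at key
  exact (mul_left_cancel₀ (inv_ne_zero hx.ne') key).symm

lemma after_fubini :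
    (∫ x in Ioi (0:ℝ), ∫ s in Ioi (0:ℝ), (-Real.log s / Real.sqrt s) *
        Real.exp (-((s^2 + 4*s + 1)/(4*s) * x)))
    = ∫ s in Ioi (0:ℝ), -4 * Real.sqrt s * Real.log s / (s^2 + 4*s + 1) := by
  have swap := integral_integral_swap (f := fun s x => (-Real.log s / Real.sqrt s) *
      Real.exp (-((s^2 + 4*s + 1)/(4*s) * x)))
    (μ := volume.restrict (Ioi (0:ℝ))) (ν := volume.restrict (Ioi (0:ℝ))) Fk_integrable
  rw [← swap]
  refine setIntegral_congr_fun measurableSet_Ioi (fun s hs => ?_)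
  rw [mem_Ioi] at hs
  rw [integral_const_mul, integral_exp_neg_mul (a_pos hs)]
  have hs0 : Real.sqrt s ≠ 0 := (Real.sqrt_pos.mpr hs).ne'
  have hss : Real.sqrt s * Real.sqrt s = s := Real.mul_self_sqrt hs.le
  have hd : s^2 + 4*s + 1 ≠ 0 := by nlinarith
  have hss2 : Real.sqrt s ^ 2 = s := Real.sq_sqrt hs.le
  field_simp
  linear_combination (Real.log s) * hss2

lemma subst_sq :
    (∫ s in Ioi (0:ℝ), -4 * Real.sqrt s * Real.log s / (s^2 + 4*s + 1))
    = ∫ u in Ioi (0:ℝ), -16 * (u^2 * Real.log u) / (u^4 + 4*u^2 + 1) := by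
  have key := integral_comp_rpow_Ioi_of_pos
    (g := fun s => -4 * Real.sqrt s * Real.log s / (s^2 + 4*s + 1)) (p := 2) two_pos
  rw [← key]
  refine setIntegral_congr_fun measurableSet_Ioi (fun u hu => ?_)
  rw [mem_Ioi] at hu
  have h2 : u ^ (2:ℝ) = u^2 := by
    rw [show (2:ℝ) = ((2:ℕ):ℝ) by norm_num, Real.rpow_natCast]
  have h1 : u ^ ((2:ℝ) - 1) = u := by norm_num
  beta_reduce
  rw [smul_eq_mul, h1, h2]
  have hsq : Real.sqrt (u^2) = u := Real.sqrt_sq hu.le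
  have hlog : Real.log (u^2) = 2 * Real.log u := by
    rw [Real.log_pow]; norm_num
  rw [hsq, hlog]
  have hd : (u^2)^2 + 4*u^2 + 1 ≠ 0 := by positivity
  have hd2 : u^4 + 4*u^2 + 1 ≠ 0 := by positivity
  field_simp
  ring


lemma final_value :
    (∫ u in Ioi (0:ℝ), -16 * (u^2 * Real.log u) / (u^4 + 4*u^2 + 1))
    = -2 * Real.sqrt 2 * π * Real.log (2 + Real.sqrt 3) := by
  have s3 : Real.sqrt 3 ^ 2 = 3 := Real.sq_sqrt (by norm_num)
  have s3pos : 0 < Real.sqrt 3 := Real.sqrt_pos.mpr (by norm_num)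
  have s3lt : Real.sqrt 3 < 2 := by nlinarith
  set A := Real.sqrt (2 - Real.sqrt 3) with hA
  set B := Real.sqrt (2 + Real.sqrt 3) with hB
  have hA0 : 0 < A := Real.sqrt_pos.mpr (by linarith)
  have hB0 : 0 < B := Real.sqrt_pos.mpr (by linarith)
  have hA2 : A^2 = 2 - Real.sqrt 3 := Real.sq_sqrt (by linarith)
  have hB2 : B^2 = 2 + Real.sqrt 3 := Real.sq_sqrt (by linarith)
  have hAB : A * B = 1 := by
    rw [hA, hB, ← Real.sqrt_mul (by linarith)]
    rw [show (2 - Real.sqrt 3) * (2 + Real.sqrt 3) = 1 by nlinarith]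
    exact Real.sqrt_one
  set L := Real.log (2 + Real.sqrt 3) with hL
  have step : (∫ u in Ioi (0:ℝ), -16 * (u^2 * Real.log u) / (u^4 + 4*u^2 + 1))
      = ∫ u in Ioi (0:ℝ), (-16/(2*Real.sqrt 3)) *
          ((2 + Real.sqrt 3) * (Real.log u / (u^2 + B^2))
            - (2 - Real.sqrt 3) * (Real.log u / (u^2 + A^2))) := by
    refine setIntegral_congr_fun measurableSet_Ioi (fun u _ => ?_)
    rw [hA2, hB2]
    have hfact : u^4 + 4*u^2 + 1 = (u^2 + (2 + Real.sqrt 3)) * (u^2 + (2 - Real.sqrt 3)) := by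
      linear_combination s3
    have d1 : u^2 + (2 + Real.sqrt 3) ≠ 0 := by positivity
    have d2 : u^2 + (2 - Real.sqrt 3) > 0 := by nlinarith [sq_nonneg u]
    rw [hfact]
    field_simp
    try ring
  rw [step, integral_const_mul,
    integral_sub ((integrableOn_log_div_sq_add_sq hB0).const_mul _)
      ((integrableOn_log_div_sq_add_sq hA0).const_mul _),
    integral_const_mul, integral_const_mul,
    integral_log_div_sq_add_sq hA0, integral_log_div_sq_add_sq hB0]
  have hlogB : Real.log B = L / 2 := by
    rw [hB, Real.log_sqrt (by linarith)]; try ring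
  have hlogA : Real.log A = -(L / 2) := by
    rw [hA, Real.log_sqrt (by linarith),
      show (2 - Real.sqrt 3) = (2 + Real.sqrt 3)⁻¹ from
        eq_inv_of_mul_eq_one_left (by nlinarith), Real.log_inv]
    ring
  have e1 : (2 + Real.sqrt 3) * (π * Real.log B / (2*B)) = B * π * L / 4 := by
    rw [hlogB, ← hB2]; field_simp; try ring
  have e2 : (2 - Real.sqrt 3) * (π * Real.log A / (2*A)) = -(A * π * L) / 4 := by
    rw [hlogA, ← hA2]; field_simp; try ring
  rw [e1, e2]
  have h6 : Real.sqrt 6 = A + B := by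
    rw [show (6:ℝ) = (A+B)^2 by nlinarith, Real.sqrt_sq (by positivity)]
  have e3 : Real.sqrt 2 * Real.sqrt 3 = A + B := by
    rw [← Real.sqrt_mul (by norm_num : (0:ℝ) ≤ 2), show (2:ℝ)*3 = 6 by norm_num, h6]
  field_simp
  linear_combination (16 * L) * e3

theorem stmt0 :
    (∫ x in Set.Ioi (0:ℝ), ∫ y in Set.Ioi (0:ℝ),
      (1 / (Real.sqrt x * Real.sqrt y)) *
        Real.exp (-(x^2 + 4*x*y + y^2) / (4*y)) * Real.log (x/y))
    = -2 * Real.sqrt 2 * π * Real.log (2 + Real.sqrt 3) := by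
  have congr1 : (∫ x in Set.Ioi (0:ℝ), ∫ y in Set.Ioi (0:ℝ),
      (1 / (Real.sqrt x * Real.sqrt y)) *
        Real.exp (-(x^2 + 4*x*y + y^2) / (4*y)) * Real.log (x/y))
      = ∫ x in Ioi (0:ℝ), ∫ s in Ioi (0:ℝ), (-Real.log s / Real.sqrt s) *
          Real.exp (-((s^2 + 4*s + 1)/(4*s) * x)) :=
    setIntegral_congr_fun measurableSet_Ioi (fun x hx => inner_eq hx)
  rw [congr1, after_fubini, subst_sq, final_value]
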